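/- Let Π_y = Π_{y∖l} + η·g·g^H where Π_{y∖l} is Hermitian positive definite, g ∈ ℂ^P nonzero, and η > −1/(g^H Π_{y∖l}^{-1} g) so that Π_y is positive definite. Setting the derivative with respect to η of f̄(η) = ln|Π_{y∖l} + η g g^H| + Tr((Π_{y∖l}+ηgg^H)^{-1} R_y) to zero yields the unique stationary point η̂ = (g^H Π_{y∖l}^{-1}(R_y − Π_{y∖l})Π_{y∖l}^{-1} g)/((g^H Π_{y∖l}^{-1} g)²). -/

import Mathlib

open Matrix Complex
open scoped ComplexOrder

lemma vecMulVec_mul' {α : Type*} {n m p : Type*} [Fintype m] [NonUnitalSemiring α]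
    (u : n → α) (v : m → α) (B : Matrix m p α) :
    vecMulVec u v * B = vecMulVec u (v ᵥ* B) := by
  ext i j
  simp [mul_apply, vecMulVec_apply, vecMul, dotProduct, Finset.mul_sum, mul_assoc]

lemma mul_vecMulVec' {α : Type*} {n m p : Type*} [Fintype m] [NonUnitalSemiring α]
    (B : Matrix n m α) (u : m → α) (v : p → α) :
    B * vecMulVec u v = vecMulVec (B *ᵥ u) v := by
  ext i j
  simp [mul_apply, vecMulVec_apply, mulVec, dotProduct, Finset.sum_mul, mul_assoc]

lemma trace_vecMulVec' {α : Type*} {n : Type*} [Fintype n] [NonUnitalNonAssocSemiring α]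
    (u v : n → α) : (vecMulVec u v).trace = u ⬝ᵥ v := rfl

lemma vecMulVec_mul_vecMulVec' {α : Type*} {n m p : Type*} [Fintype m] [CommRing α]
    (u : n → α) (v w : m → α) (x : p → α) :
    vecMulVec u v * vecMulVec w x = (v ⬝ᵥ w) • vecMulVec u x := by
  ext i j
  simp only [mul_apply, vecMulVec_apply, Matrix.smul_apply, dotProduct, smul_eq_mul, Finset.sum_mul]
  exact Finset.sum_congr rfl fun k _ => by ring

/-- Refined power estimate in the SBL direction refinement: for
`Π_y(η) = Π_{y∖l} + η g gᴴ` with `Π_{y∖l}` Hermitian positive definite, `g ≠ 0`,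
`R_y` Hermitian, and `f̄(η) = ln|Π_y(η)| + Tr(Π_y(η)⁻¹ R_y)` (real parts of the
determinant and trace, which are real), on the range of `η` keeping `Π_y(η)`
positive definite the derivative of `f̄` vanishes exactly at the unique
stationary point `η̂ = gᴴΠ_{y∖l}⁻¹(R_y − Π_{y∖l})Π_{y∖l}⁻¹g / (gᴴΠ_{y∖l}⁻¹g)²`. -/
theorem refined_power_stationary
    (P : ℕ) (A R : Matrix (Fin P) (Fin P) ℂ) (hA : A.PosDef) (hR : R.IsHermitian)
    (g : Fin P → ℂ) (hg : g ≠ 0) :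
    ∀ η : ℝ,
      -1 / (star g ⬝ᵥ A⁻¹.mulVec g).re < η →
      (deriv (fun t : ℝ =>
          Real.log ((A + (t : ℂ) • Matrix.vecMulVec g (star g)).det.re)
            + (((A + (t : ℂ) • Matrix.vecMulVec g (star g))⁻¹ * R).trace).re) η = 0
        ↔ (η : ℂ) =
            (star g ⬝ᵥ (A⁻¹ * (R - A) * A⁻¹).mulVec g)
              / (star g ⬝ᵥ A⁻¹.mulVec g) ^ 2) := by
  intro η hη
  have hAH : A.IsHermitian := hA.1
  have hdetA : (0 : ℂ) < A.det := hA.det_pos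
  have hAdet_unit : IsUnit A.det := isUnit_iff_ne_zero.2 hdetA.ne'
  have hAinv : A * A⁻¹ = 1 := Matrix.mul_nonsing_inv A hAdet_unit
  have hinvA : A⁻¹ * A = 1 := Matrix.nonsing_inv_mul A hAdet_unit
  set G : Matrix (Fin P) (Fin P) ℂ := vecMulVec g (star g) with hG
  set c : ℂ := star g ⬝ᵥ A⁻¹.mulVec g with hc
  have hcpos : 0 < c := hA.inv.dotProduct_mulVec_pos hg
  have hcre : 0 < c.re := (Complex.lt_def.1 hcpos).1
  have hcim : c.im = 0 := (Complex.lt_def.1 hcpos).2.symm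
  set cr : ℝ := c.re with hcr
  have hcC : c = (cr : ℝ) := Complex.ext (by simpa using hcr.symm) (by simp [hcim])
  set dr : ℝ := A.det.re with hdr
  have hdpos : 0 < dr := (Complex.lt_def.1 hdetA).1
  have hdim : A.det.im = 0 := (Complex.lt_def.1 hdetA).2.symm
  have hdC : A.det = (dr : ℝ) := Complex.ext (by simpa using hdr.symm) (by simp [hdim])
  set b : ℂ := star g ⬝ᵥ (A⁻¹ * R * A⁻¹).mulVec g with hb
  have hMH : (A⁻¹ * R * A⁻¹).IsHermitian := by
    have h1 : A⁻¹.IsHermitian := hAH.inv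
    unfold Matrix.IsHermitian
    rw [conjTranspose_mul, conjTranspose_mul, h1, hR, Matrix.mul_assoc]
  have hbstar : star b = b := by
    have h1 : star b = star ((A⁻¹ * R * A⁻¹) *ᵥ g) ⬝ᵥ g := by
      rw [hb, star_dotProduct, star_star]
    rw [h1, star_mulVec, hMH, ← dotProduct_mulVec]
  have hbim : b.im = 0 := by
    have h := congrArg Complex.im hbstar
    simp only [Complex.star_def, Complex.conj_im] at h
    linarith
  set br : ℝ := b.re with hbr
  have hbC : b = (br : ℝ) := Complex.ext (by simpa using hbr.symm) (by simp [hbim])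
  set k : ℝ := ((A⁻¹ * R).trace).re with hk
  -- membership / positivity
  have hηpos : 0 < 1 + η * cr := by
    have h1 : -1 / cr * cr < η * cr := by
      exact mul_lt_mul_of_pos_right hη hcre
    rw [div_mul_cancel₀ _ hcre.ne'] at h1
    linarith
  -- the rank-one identities, valid for t with 0 < 1 + t * cr
  have hGAG : G * A⁻¹ * G = c • G := by
    rw [hG, vecMulVec_mul', vecMulVec_mul_vecMulVec', ← dotProduct_mulVec, ← hc]
  -- determinant formula (any t)
  have hdet : ∀ t : ℝ, (A + (t : ℂ) • G).det = A.det * (1 + (t : ℂ) * c) := by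
    intro t
    have hsmul : (t : ℂ) • G = replicateCol (Fin 1) ((t : ℂ) • g) * replicateRow (Fin 1) (star g) := by
      rw [hG, vecMulVec_eq (Fin 1), replicateCol_smul, Matrix.smul_mul]
      rfl
    erw [hsmul, det_add_replicateCol_mul_replicateRow hAdet_unit]
    congr 1
    simp only [det_unique, Matrix.add_apply, Matrix.one_apply_eq]
    rw [Matrix.mul_assoc, ← replicateCol_mulVec, replicateRow_mul_replicateCol_apply, mulVec_smul, dotProduct_smul, ← hc]
    simp [smul_eq_mul]
  -- Sherman-Morrison
  have hden : ∀ t : ℝ, 0 < 1 + t * cr → (1 + (t : ℂ) * c) ≠ 0 := by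
    intro t ht
    rw [hcC]
    have : ((1 + t * cr : ℝ) : ℂ) ≠ 0 := by
      exact_mod_cast ne_of_gt ht
    push_cast at this ⊢
    exact this
  have hinv : ∀ t : ℝ, 0 < 1 + t * cr →
      (A + (t : ℂ) • G)⁻¹
        = A⁻¹ - ((t : ℂ) / (1 + (t : ℂ) * c)) • (A⁻¹ * G * A⁻¹) := by
    intro t ht
    apply Matrix.inv_eq_right_inv
    set s : ℂ := (t : ℂ) / (1 + (t : ℂ) * c) with hs
    have hts : s * (1 + (t : ℂ) * c) = (t : ℂ) := div_mul_cancel₀ _ (hden t ht)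
    have hGY : G * (A⁻¹ * G * A⁻¹) = c • (G * A⁻¹) := by
      rw [← Matrix.mul_assoc, ← Matrix.mul_assoc, hGAG, Matrix.smul_mul]
    have hAY : A * (A⁻¹ * G * A⁻¹) = G * A⁻¹ := by
      rw [← Matrix.mul_assoc, ← Matrix.mul_assoc, hAinv, Matrix.one_mul]
    have hcoef : (t : ℂ) - s - (t : ℂ) * s * c = 0 := by
      have h := hts; linear_combination -h
    calc (A + (t : ℂ) • G) * (A⁻¹ - s • (A⁻¹ * G * A⁻¹))
        = A * A⁻¹ - s • (A * (A⁻¹ * G * A⁻¹))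
            + ((t : ℂ) • (G * A⁻¹) - ((t : ℂ) * s) • (G * (A⁻¹ * G * A⁻¹))) := by
          rw [Matrix.add_mul, Matrix.mul_sub, Matrix.mul_sub, Matrix.mul_smul,
            Matrix.smul_mul, Matrix.smul_mul, Matrix.mul_smul, smul_smul]
      _ = 1 + ((t : ℂ) - s - (t : ℂ) * s * c) • (G * A⁻¹) := by
          rw [hAinv, hAY, hGY, smul_smul]
          module
      _ = 1 := by rw [hcoef, zero_smul, add_zero]
  -- trace formula
  have htrace : ∀ t : ℝ, 0 < 1 + t * cr →
      ((A + (t : ℂ) • G)⁻¹ * R).trace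
        = (A⁻¹ * R).trace - ((t : ℂ) / (1 + (t : ℂ) * c)) * b := by
    intro t ht
    rw [hinv t ht, Matrix.sub_mul, Matrix.smul_mul, trace_sub, trace_smul]
    congr 1
    rw [smul_eq_mul]
    congr 1
    have h1 : A⁻¹ * G * A⁻¹ * R = vecMulVec (A⁻¹ *ᵥ g) (star g ᵥ* (A⁻¹ * R)) := by
      rw [hG, mul_vecMulVec', vecMulVec_mul', vecMulVec_mul', vecMul_vecMul]
    rw [h1, trace_vecMulVec', dotProduct_comm, dotProduct_mulVec, vecMul_vecMul,
      ← dotProduct_mulVec, hb, ← mulVec_mulVec, mulVec_mulVec, Matrix.mul_assoc]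
  -- real-valued reformulation near η
  set F : ℝ → ℝ := fun t => Real.log (dr * (1 + t * cr)) + (k - t / (1 + t * cr) * br)
    with hF
  have hS : IsOpen {t : ℝ | 0 < 1 + t * cr} := by
    exact isOpen_Ioi.preimage (continuous_const.add (continuous_id.mul continuous_const))
  have hmem : {t : ℝ | 0 < 1 + t * cr} ∈ nhds η := hS.mem_nhds hηpos
  have hev : (fun t : ℝ =>
          Real.log ((A + (t : ℂ) • Matrix.vecMulVec g (star g)).det.re)
            + (((A + (t : ℂ) • Matrix.vecMulVec g (star g))⁻¹ * R).trace).re)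
        =ᶠ[nhds η] F := by
    filter_upwards [hmem] with t ht
    have hdet' : (A + (t : ℂ) • G).det.re = dr * (1 + t * cr) := by
      rw [hdet t, hdC, hcC]
      push_cast
      rw [show ((dr : ℂ)) * (1 + (t : ℂ) * (cr : ℂ)) = ((dr * (1 + t * cr) : ℝ) : ℂ) by
        push_cast; ring]
      exact Complex.ofReal_re _
    have htr' : (((A + (t : ℂ) • G)⁻¹ * R).trace).re = k - t / (1 + t * cr) * br := by
      rw [htrace t ht, hbC, hcC]
      have hcast : ((t : ℂ) / (1 + (t : ℂ) * ((cr : ℝ) : ℂ))) * ((br : ℝ) : ℂ)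
          = ((t / (1 + t * cr) * br : ℝ) : ℂ) := by push_cast; ring
      rw [hcast, Complex.sub_re, Complex.ofReal_re, hk]
    simp only [← hG, hdet', htr', hF]
  -- derivative of F at η
  have hne : (1 + η * cr) ≠ 0 := hηpos.ne'
  have hder1 : HasDerivAt (fun t : ℝ => Real.log (dr * (1 + t * cr)))
      ((dr * cr) / (dr * (1 + η * cr))) η := by
    have hlin : HasDerivAt (fun t : ℝ => dr * (1 + t * cr)) (dr * cr) η := by
      have : HasDerivAt (fun t : ℝ => 1 + t * cr) cr η := by
        simpa using ((hasDerivAt_id' η).mul_const cr).const_add 1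
      simpa using this.const_mul dr
    exact hlin.log (by positivity)
  have hder2 : HasDerivAt (fun t : ℝ => k - t / (1 + t * cr) * br)
      (-((1 * (1 + η * cr) - η * cr) / (1 + η * cr) ^ 2 * br)) η := by
    have hdiv : HasDerivAt (fun t : ℝ => t / (1 + t * cr))
        ((1 * (1 + η * cr) - η * cr) / (1 + η * cr) ^ 2) η := by
      have hd : HasDerivAt (fun t : ℝ => 1 + t * cr) cr η := by
        simpa using ((hasDerivAt_id' η).mul_const cr).const_add 1
      exact (hasDerivAt_id' η).div hd hne
    simpa using (hdiv.mul_const br).const_sub k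
  have hderF : deriv F η
      = (dr * cr) / (dr * (1 + η * cr)) + -((1 * (1 + η * cr) - η * cr) / (1 + η * cr) ^ 2 * br) :=
    (hder1.add hder2).deriv
  have hderiv_eq : deriv (fun t : ℝ =>
          Real.log ((A + (t : ℂ) • Matrix.vecMulVec g (star g)).det.re)
            + (((A + (t : ℂ) • Matrix.vecMulVec g (star g))⁻¹ * R).trace).re) η
      = (dr * cr) / (dr * (1 + η * cr)) + -((1 * (1 + η * cr) - η * cr) / (1 + η * cr) ^ 2 * br) := by
    rw [hev.deriv_eq, hderF]
  -- right hand side simplification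
  have hRHS : (star g ⬝ᵥ (A⁻¹ * (R - A) * A⁻¹).mulVec g) = b - c := by
    have : A⁻¹ * (R - A) * A⁻¹ = A⁻¹ * R * A⁻¹ - A⁻¹ := by
      rw [Matrix.mul_sub, Matrix.sub_mul, hinvA, Matrix.one_mul]
    rw [this, sub_mulVec, dotProduct_sub, ← hb, ← hc]
  rw [hderiv_eq, hRHS, hbC, hcC]
  -- final equivalence
  have hfinal : ((η : ℂ) = (((br : ℝ) : ℂ) - ((cr : ℝ) : ℂ)) / (((cr : ℝ) : ℂ)) ^ 2)
      ↔ η = (br - cr) / cr ^ 2 := by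
    rw [show (((br : ℝ) : ℂ) - ((cr : ℝ) : ℂ)) / (((cr : ℝ) : ℂ)) ^ 2
        = (((br - cr) / cr ^ 2 : ℝ) : ℂ) by push_cast; ring]
    exact Complex.ofReal_inj
  rw [hfinal]
  have hcr2 : (cr : ℝ) ^ 2 ≠ 0 := pow_ne_zero _ hcre.ne'
  have hXD : (cr * (1 + η * cr) - br) / (1 + η * cr) ^ 2
      = dr * cr / (dr * (1 + η * cr)) + -((1 * (1 + η * cr) - η * cr) / (1 + η * cr) ^ 2 * br) := by
    rw [mul_div_mul_left _ _ hdpos.ne']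
    field_simp
    ring
  constructor
  · intro h
    have hD : (cr * (1 + η * cr) - br) / (1 + η * cr) ^ 2 = 0 := hXD.trans h
    have hnum : cr * (1 + η * cr) - br = 0 := by
      rcases div_eq_zero_iff.1 hD with h' | h'
      · exact h'
      · exact absurd h' (pow_ne_zero 2 hne)
    rw [eq_div_iff hcr2]
    linear_combination hnum
  · intro h
    have hη' : η * cr ^ 2 = br - cr := by
      rw [h, div_mul_cancel₀ _ hcr2]
    have hb' : br = cr * (1 + η * cr) := by linear_combination -hη'
    rw [← hXD, hb']
    apply div_eq_zero_iff.2
    left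
    ring
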